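/- arXiv:2504.15615 — 6 statements merged into one kernel-verified Lean document; each statement's English description precedes it below -/
import Mathlib

section
/- Proposition 3.4 (no type regret under the smooth optimal decision rule). Fix ε > 0, β > 0, and loss functions ℓ, ℓ′ : 𝒜×𝒴 → ℝ with loss estimators f_ℓ, f_{ℓ′} : 𝒳×𝒜 → ℝ, and let k̃_ℓ, k̃_{ℓ′} be the smooth optimal decision rules induced by f_ℓ and f_{ℓ′}. Suppose the decision-calibration conditions |E_{(x,y)∼D}[Σ_{a∈𝒜} k̃(x,a)·(ℓ(a,y) − f_ℓ(x,a))]| ≤ ε hold for both k̃ = k̃_ℓ and k̃ = k̃_{ℓ′}. Then E_{(x,y)∼D}[Σ_{a∈𝒜} k̃_ℓ(x,a)·ℓ(a,y)] ≤ E_{(x,y)∼D}[Σ_{a∈𝒜} k̃_{ℓ′}(x,a)·ℓ(a,y)] + 2ε + (log|𝒜| + 1)/β. -/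
open MeasureTheory

section aux
variable {A : Type*} [Fintype A] [Nonempty A]

lemma Zpos (β : ℝ) (g : A → ℝ) : 0 < ∑ a', Real.exp (-β * g a') :=
  Finset.sum_pos (fun a _ => Real.exp_pos _) Finset.univ_nonempty

lemma inf_le_weighted (g q : A → ℝ) (hq : ∀ a, 0 ≤ q a) (hs : ∑ a, q a = 1) :
    Finset.univ.inf' Finset.univ_nonempty g ≤ ∑ a, q a * g a := by
  calc Finset.univ.inf' Finset.univ_nonempty g
      = ∑ a, q a * Finset.univ.inf' Finset.univ_nonempty g := by
        rw [← Finset.sum_mul, hs, one_mul]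
    _ ≤ ∑ a, q a * g a := Finset.sum_le_sum fun a _ =>
        mul_le_mul_of_nonneg_left (Finset.inf'_le _ (Finset.mem_univ a)) (hq a)

lemma softmax_self_le (β : ℝ) (hβ : 0 < β) (g : A → ℝ) :
    ∑ a, (Real.exp (-β * g a) / ∑ a', Real.exp (-β * g a')) * g a
      ≤ Finset.univ.inf' Finset.univ_nonempty g + (Real.log (Fintype.card A) + 1) / β := by
  set Z := ∑ a', Real.exp (-β * g a') with hZdef
  have hZ : 0 < Z := Zpos β g
  set m := Finset.univ.inf' Finset.univ_nonempty g with hm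
  set p := fun a : A => Real.exp (-β * g a) / Z with hp
  have hppos : ∀ a, 0 < p a := fun a => div_pos (Real.exp_pos _) hZ
  have hpsum : ∑ a, p a = 1 := by
    simp only [hp, ← Finset.sum_div]
    exact div_self (ne_of_gt hZ)
  have hn : (0 : ℝ) < (Fintype.card A : ℝ) := by
    exact_mod_cast Fintype.card_pos
  -- g a in terms of p
  have hg : ∀ a, g a = -(Real.log (p a) + Real.log Z) / β := by
    intro a
    have h1 : p a * Z = Real.exp (-β * g a) := div_mul_cancel₀ _ (ne_of_gt hZ)
    have h2 : Real.log (p a) + Real.log Z = -β * g a := by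
      rw [← Real.log_mul (ne_of_gt (hppos a)) (ne_of_gt hZ), h1, Real.log_exp]
    field_simp
    linarith [h2]
  -- entropy bound
  have hent : ∑ a, p a * (-Real.log (p a)) ≤ Real.log (Fintype.card A) := by
    have key : ∀ a, p a * (-Real.log (p a)) ≤
        p a * Real.log (Fintype.card A) + 1 / (Fintype.card A : ℝ) - p a := by
      intro a
      have hx : (0:ℝ) < 1 / ((Fintype.card A : ℝ) * p a) :=
        one_div_pos.mpr (mul_pos hn (hppos a))
      have hlog := Real.log_le_sub_one_of_pos hx
      have heq : Real.log (1 / ((Fintype.card A : ℝ) * p a))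
          = -(Real.log (Fintype.card A) + Real.log (p a)) := by
        rw [Real.log_div one_ne_zero (ne_of_gt (mul_pos hn (hppos a))), Real.log_one,
          Real.log_mul (ne_of_gt hn) (ne_of_gt (hppos a))]
        ring
      rw [heq] at hlog
      have : p a * (-(Real.log (Fintype.card A) + Real.log (p a)))
          ≤ p a * (1 / ((Fintype.card A : ℝ) * p a) - 1) :=
        mul_le_mul_of_nonneg_left hlog (le_of_lt (hppos a))
      have h3 : p a * (1 / ((Fintype.card A : ℝ) * p a)) = 1 / (Fintype.card A : ℝ) := by
        rw [one_div, one_div, mul_inv, mul_left_comm, mul_inv_cancel₀ (ne_of_gt (hppos a)), mul_one]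
      nlinarith [this]
    calc ∑ a, p a * (-Real.log (p a))
        ≤ ∑ a, (p a * Real.log (Fintype.card A) + 1 / (Fintype.card A : ℝ) - p a) :=
          Finset.sum_le_sum fun a _ => key a
      _ = Real.log (Fintype.card A) := by
          rw [Finset.sum_sub_distrib, Finset.sum_add_distrib, ← Finset.sum_mul, hpsum,
            Finset.sum_const, Finset.card_univ, nsmul_eq_mul]
          field_simp
          ring
  -- log Z lower bound
  have hZlb : -β * m ≤ Real.log Z := by
    obtain ⟨a0, _, ha0⟩ := Finset.exists_mem_eq_inf' (Finset.univ_nonempty) g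
    have : Real.exp (-β * m) ≤ Z := by
      rw [hZdef, hm, ha0]
      exact Finset.single_le_sum (f := fun a => Real.exp (-β * g a))
        (fun a _ => le_of_lt (Real.exp_pos _)) (Finset.mem_univ a0)
    calc -β * m = Real.log (Real.exp (-β * m)) := (Real.log_exp _).symm
      _ ≤ Real.log Z := Real.log_le_log (Real.exp_pos _) this
  -- combine
  have hterm : ∀ a, p a * g a = (p a * (-Real.log (p a)) - p a * Real.log Z) / β := by
    intro a
    rw [hg a]
    field_simp
    ring
  have hsum : ∑ a, p a * g a = (∑ a, p a * (-Real.log (p a)) - Real.log Z) / β := by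
    rw [Finset.sum_congr rfl (fun a _ => hterm a), ← Finset.sum_div,
      Finset.sum_sub_distrib, ← Finset.sum_mul, hpsum, one_mul]
  have hshow : ∑ a, (Real.exp (-β * g a) / Z) * g a = ∑ a, p a * g a := rfl
  rw [hshow, hsum]
  have h1 : ∑ a, p a * (-Real.log (p a)) - Real.log Z
      ≤ Real.log (Fintype.card A) + β * m := by
    have : -Real.log Z ≤ β * m := by linarith [hZlb]
    linarith [hent]
  calc (∑ a, p a * (-Real.log (p a)) - Real.log Z) / β
      ≤ (Real.log (Fintype.card A) + β * m) / β := by gcongr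
    _ = m + Real.log (Fintype.card A) / β := by field_simp; ring
    _ ≤ m + (Real.log (Fintype.card A) + 1) / β := by
        have : Real.log (Fintype.card A) / β ≤ (Real.log (Fintype.card A) + 1) / β := by
          gcongr
          linarith
        linarith
end aux

/-- The smooth optimal decision rule (quantal response) induced by a loss estimator `f`. -/
noncomputable def smoothRule {X A : Type*} [Fintype A]
    (β : ℝ) (f : X → A → ℝ) (x : X) (a : A) : ℝ :=
  Real.exp (-β * f x a) / ∑ a', Real.exp (-β * f x a')

/-- **Proposition 3.4** (no type regret under the smooth optimal decision rule). -/
theorem stmt3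
    {X Y A : Type*} [MeasurableSpace X] [MeasurableSpace Y]
    [Fintype A] [Nonempty A]
    (D : Measure (X × Y)) [IsProbabilityMeasure D]
    (ε β : ℝ) (hε : 0 < ε) (hβ : 0 < β)
    (ℓ ℓ' : A → Y → ℝ) (fℓ fℓ' : X → A → ℝ)
    (hInt1 : Integrable (fun z : X × Y => ∑ a, smoothRule β fℓ z.1 a * ℓ a z.2) D)
    (hInt2 : Integrable (fun z : X × Y => ∑ a, smoothRule β fℓ' z.1 a * ℓ a z.2) D)
    (hInt3 : Integrable (fun z : X × Y => ∑ a, smoothRule β fℓ z.1 a * fℓ z.1 a) D)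
    (hInt4 : Integrable (fun z : X × Y => ∑ a, smoothRule β fℓ' z.1 a * fℓ z.1 a) D)
    (hInt5 : Integrable (fun z : X × Y => Finset.univ.inf' Finset.univ_nonempty (fℓ z.1)) D)
    (hcal1 : |∫ z, (∑ a, smoothRule β fℓ z.1 a * (ℓ a z.2 - fℓ z.1 a)) ∂D| ≤ ε)
    (hcal2 : |∫ z, (∑ a, smoothRule β fℓ' z.1 a * (ℓ a z.2 - fℓ z.1 a)) ∂D| ≤ ε) :
    (∫ z, (∑ a, smoothRule β fℓ z.1 a * ℓ a z.2) ∂D)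
      ≤ (∫ z, (∑ a, smoothRule β fℓ' z.1 a * ℓ a z.2) ∂D) + 2 * ε
          + (Real.log (Fintype.card A) + 1) / β := by
  set C := (Real.log (Fintype.card A) + 1) / β with hC
  -- rewrite calibration integrands as differences
  have hdiff : ∀ (k : X → A → ℝ),
      (fun z : X × Y => ∑ a, k z.1 a * (ℓ a z.2 - fℓ z.1 a))
        = (fun z : X × Y => (∑ a, k z.1 a * ℓ a z.2) - ∑ a, k z.1 a * fℓ z.1 a) := by
    intro k
    funext z
    rw [← Finset.sum_sub_distrib]
    apply Finset.sum_congr rfl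
    intro a _
    ring
  have hcal1' : |(∫ z, (∑ a, smoothRule β fℓ z.1 a * ℓ a z.2) ∂D)
      - (∫ z, (∑ a, smoothRule β fℓ z.1 a * fℓ z.1 a) ∂D)| ≤ ε := by
    rw [← integral_sub hInt1 hInt3]
    rw [hdiff (fun x a => smoothRule β fℓ x a)] at hcal1
    exact hcal1
  have hcal2' : |(∫ z, (∑ a, smoothRule β fℓ' z.1 a * ℓ a z.2) ∂D)
      - (∫ z, (∑ a, smoothRule β fℓ' z.1 a * fℓ z.1 a) ∂D)| ≤ ε := by
    rw [← integral_sub hInt2 hInt4]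
    rw [hdiff (fun x a => smoothRule β fℓ' x a)] at hcal2
    exact hcal2
  -- middle chain
  have hmid1 : (∫ z, (∑ a, smoothRule β fℓ z.1 a * fℓ z.1 a) ∂D)
      ≤ (∫ z, Finset.univ.inf' Finset.univ_nonempty (fℓ z.1) ∂D) + C := by
    have hpt : ∀ z : X × Y, (∑ a, smoothRule β fℓ z.1 a * fℓ z.1 a)
        ≤ Finset.univ.inf' Finset.univ_nonempty (fℓ z.1) + C := by
      intro z
      exact softmax_self_le β hβ (fℓ z.1)
    calc (∫ z, (∑ a, smoothRule β fℓ z.1 a * fℓ z.1 a) ∂D)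
        ≤ ∫ z, (Finset.univ.inf' Finset.univ_nonempty (fℓ z.1) + C) ∂D :=
          integral_mono hInt3 (hInt5.add (integrable_const C)) hpt
      _ = (∫ z, Finset.univ.inf' Finset.univ_nonempty (fℓ z.1) ∂D) + C := by
          rw [integral_add hInt5 (integrable_const C), integral_const]
          simp
  have hmid2 : (∫ z, Finset.univ.inf' Finset.univ_nonempty (fℓ z.1) ∂D)
      ≤ ∫ z, (∑ a, smoothRule β fℓ' z.1 a * fℓ z.1 a) ∂D := by
    apply integral_mono hInt5 hInt4
    intro z
    apply inf_le_weighted (fℓ z.1) (smoothRule β fℓ' z.1)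
    · intro a
      exact div_nonneg (le_of_lt (Real.exp_pos _)) (le_of_lt (Zpos β (fℓ' z.1)))
    · simp only [smoothRule, ← Finset.sum_div]
      exact div_self (ne_of_gt (Zpos β (fℓ' z.1)))
  have a1 := (abs_le.mp hcal1').2
  have a2 := (abs_le.mp hcal2').1
  linarith
end

section
/- Lemma 4.2 (decision calibration error for two actions and linear losses). The supremum over r₁, r₂ in the closed Euclidean unit ball of ℝ^d and r ∈ ℝ^d of |E_{(x,y)∼D}[ 1{⟨r, p(x)⟩ > 0}·⟨r₂, y − p(x)⟩ + 1{⟨r, p(x)⟩ ≤ 0}·⟨r₁, y − p(x)⟩ ]| is equal to the supremum over r ∈ ℝ^d of ‖E_{(x,y)∼D}[(y − p(x))·1{⟨r, p(x)⟩ > 0}]‖₂ + ‖E_{(x,y)∼D}[(y − p(x))·1{⟨r, p(x)⟩ ≤ 0}]‖₂. -/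
open MeasureTheory RealInnerProductSpace
open scoped Classical

/-- **Lemma 4.2** (decision calibration error for two actions and linear losses). -/
theorem stmt4 {X : Type*} [MeasurableSpace X] (d : ℕ)
    (D : Measure (X × EuclideanSpace ℝ (Fin d))) [IsProbabilityMeasure D]
    (p : X → EuclideanSpace ℝ (Fin d)) (hp : Measurable p)
    (hpball : ∀ x, ‖p x‖ ≤ 1)
    (hyball : ∀ᵐ z ∂D, ‖z.2‖ ≤ 1) :
    sSup {v : ℝ | ∃ r₁ r₂ r : EuclideanSpace ℝ (Fin d), ‖r₁‖ ≤ 1 ∧ ‖r₂‖ ≤ 1 ∧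
        v = |∫ z, (if 0 < ⟪r, p z.1⟫ then ⟪r₂, z.2 - p z.1⟫
                   else ⟪r₁, z.2 - p z.1⟫) ∂D|}
      = sSup {v : ℝ | ∃ r : EuclideanSpace ℝ (Fin d),
          v = ‖∫ z, (if 0 < ⟪r, p z.1⟫ then (1 : ℝ) else 0) • (z.2 - p z.1) ∂D‖
            + ‖∫ z, (if ⟪r, p z.1⟫ ≤ 0 then (1 : ℝ) else 0) • (z.2 - p z.1) ∂D‖} := by
  have hpz : Measurable fun z : X × EuclideanSpace ℝ (Fin d) => p z.1 := by
    exact hp.comp measurable_fst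
  set F : EuclideanSpace ℝ (Fin d) → (X × EuclideanSpace ℝ (Fin d)) → EuclideanSpace ℝ (Fin d) :=
    fun r z => (if 0 < ⟪r, p z.1⟫ then (1 : ℝ) else 0) • (z.2 - p z.1) with hF
  set G : EuclideanSpace ℝ (Fin d) → (X × EuclideanSpace ℝ (Fin d)) → EuclideanSpace ℝ (Fin d) :=
    fun r z => (if ⟪r, p z.1⟫ ≤ 0 then (1 : ℝ) else 0) • (z.2 - p z.1) with hG
  have hmeas : ∀ r : EuclideanSpace ℝ (Fin d),
      Measurable fun z : X × EuclideanSpace ℝ (Fin d) => ⟪r, p z.1⟫ := fun r => by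
    exact ((continuous_const.inner continuous_id).measurable).comp hpz
  have hsub : Measurable fun z : X × EuclideanSpace ℝ (Fin d) => z.2 - p z.1 := by
    exact measurable_snd.sub hpz
  have hbound : ∀ᵐ z ∂D, ‖z.2 - p z.1‖ ≤ 2 := by
    filter_upwards [hyball] with z hz
    calc ‖z.2 - p z.1‖ ≤ ‖z.2‖ + ‖p z.1‖ := norm_sub_le _ _
      _ ≤ 2 := by linarith [hpball z.1]
  have hFle : ∀ r : EuclideanSpace ℝ (Fin d), ∀ᵐ z ∂D, ‖F r z‖ ≤ 2 := by
    intro r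
    filter_upwards [hbound] with z hz
    simp only [hF, norm_smul]
    split_ifs <;> simp <;> linarith
  have hGle : ∀ r : EuclideanSpace ℝ (Fin d), ∀ᵐ z ∂D, ‖G r z‖ ≤ 2 := by
    intro r
    filter_upwards [hbound] with z hz
    simp only [hG, norm_smul]
    split_ifs <;> simp <;> linarith
  have hIntF : ∀ r : EuclideanSpace ℝ (Fin d), Integrable (F r) D := by
    intro r
    refine Integrable.mono' (integrable_const 2) ?_ (hFle r)
    exact ((Measurable.ite (measurableSet_lt (measurable_const (a := (0:ℝ))) (hmeas r))
      (measurable_const (a := (1:ℝ))) (measurable_const (a := (0:ℝ)))).smul hsub).aestronglyMeasurable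
  have hIntG : ∀ r : EuclideanSpace ℝ (Fin d), Integrable (G r) D := by
    intro r
    refine Integrable.mono' (integrable_const 2) ?_ (hGle r)
    exact ((Measurable.ite (measurableSet_le (hmeas r) (measurable_const (a := (0:ℝ))))
      (measurable_const (a := (1:ℝ))) (measurable_const (a := (0:ℝ)))).smul hsub).aestronglyMeasurable
  have hnormF : ∀ r : EuclideanSpace ℝ (Fin d), ‖∫ z, F r z ∂D‖ ≤ 2 := by
    intro r
    have := norm_integral_le_of_norm_le (f := F r) (g := fun _ => (2 : ℝ))
      (integrable_const 2) (hFle r)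
    simpa using this
  have hnormG : ∀ r : EuclideanSpace ℝ (Fin d), ‖∫ z, G r z ∂D‖ ≤ 2 := by
    intro r
    have := norm_integral_le_of_norm_le (f := G r) (g := fun _ => (2 : ℝ))
      (integrable_const 2) (hGle r)
    simpa using this
  -- key identity
  have key : ∀ r₁ r₂ r : EuclideanSpace ℝ (Fin d),
      (∫ z, (if 0 < ⟪r, p z.1⟫ then ⟪r₂, z.2 - p z.1⟫ else ⟪r₁, z.2 - p z.1⟫) ∂D)
        = ⟪r₂, ∫ z, F r z ∂D⟫ + ⟪r₁, ∫ z, G r z ∂D⟫ := by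
    intro r₁ r₂ r
    have hpt : ∀ z : X × EuclideanSpace ℝ (Fin d),
        (if 0 < ⟪r, p z.1⟫ then ⟪r₂, z.2 - p z.1⟫ else ⟪r₁, z.2 - p z.1⟫)
          = ⟪r₂, F r z⟫ + ⟪r₁, G r z⟫ := by
      intro z
      by_cases h : 0 < ⟪r, p z.1⟫
      · simp only [hF, hG, if_pos h, if_neg (not_le.mpr h), one_smul, zero_smul,
          inner_zero_right, add_zero]
      · simp only [hF, hG, if_neg h, if_pos (not_lt.mp h), one_smul, zero_smul,
          inner_zero_right, zero_add]
    rw [integral_congr_ae (Filter.Eventually.of_forall hpt)]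
    rw [integral_add ((hIntF r).const_inner r₂) ((hIntG r).const_inner r₁),
      integral_inner (hIntF r) r₂, integral_inner (hIntG r) r₁]
  set S := {v : ℝ | ∃ r₁ r₂ r : EuclideanSpace ℝ (Fin d), ‖r₁‖ ≤ 1 ∧ ‖r₂‖ ≤ 1 ∧
      v = |∫ z, (if 0 < ⟪r, p z.1⟫ then ⟪r₂, z.2 - p z.1⟫ else ⟪r₁, z.2 - p z.1⟫) ∂D|}
    with hS
  set T := {v : ℝ | ∃ r : EuclideanSpace ℝ (Fin d),
      v = ‖∫ z, F r z ∂D‖ + ‖∫ z, G r z ∂D‖} with hT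
  have hTS : T ⊆ S := by
    rintro v ⟨r, rfl⟩
    set A := ∫ z, F r z ∂D with hA
    set B := ∫ z, G r z ∂D with hB
    refine ⟨if B = 0 then 0 else ‖B‖⁻¹ • B, if A = 0 then 0 else ‖A‖⁻¹ • A, r, ?_, ?_, ?_⟩
    · split_ifs with h
      · simp
      · rw [norm_smul, norm_inv, norm_norm, inv_mul_cancel₀ (norm_ne_zero_iff.mpr h)]
    · split_ifs with h
      · simp
      · rw [norm_smul, norm_inv, norm_norm, inv_mul_cancel₀ (norm_ne_zero_iff.mpr h)]
    · rw [key]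
      have h2 : ⟪if A = 0 then (0 : EuclideanSpace ℝ (Fin d)) else ‖A‖⁻¹ • A, A⟫ = ‖A‖ := by
        split_ifs with h
        · simp [h]
        · rw [real_inner_smul_left, real_inner_self_eq_norm_sq, sq, ← mul_assoc,
            inv_mul_cancel₀ (norm_ne_zero_iff.mpr h), one_mul]
      have h1 : ⟪if B = 0 then (0 : EuclideanSpace ℝ (Fin d)) else ‖B‖⁻¹ • B, B⟫ = ‖B‖ := by
        split_ifs with h
        · simp [h]
        · rw [real_inner_smul_left, real_inner_self_eq_norm_sq, sq, ← mul_assoc,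
            inv_mul_cancel₀ (norm_ne_zero_iff.mpr h), one_mul]
      rw [h2, h1, abs_of_nonneg (by positivity)]
  have hSle : ∀ v ∈ S, ∃ t ∈ T, v ≤ t := by
    rintro v ⟨r₁, r₂, r, h1, h2, rfl⟩
    refine ⟨‖∫ z, F r z ∂D‖ + ‖∫ z, G r z ∂D‖, ⟨r, rfl⟩, ?_⟩
    rw [key]
    calc |⟪r₂, ∫ z, F r z ∂D⟫ + ⟪r₁, ∫ z, G r z ∂D⟫|
        ≤ |⟪r₂, ∫ z, F r z ∂D⟫| + |⟪r₁, ∫ z, G r z ∂D⟫| := abs_add_le _ _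
      _ ≤ ‖r₂‖ * ‖∫ z, F r z ∂D‖ + ‖r₁‖ * ‖∫ z, G r z ∂D‖ := by
          gcongr <;> exact abs_real_inner_le_norm _ _
      _ ≤ ‖∫ z, F r z ∂D‖ + ‖∫ z, G r z ∂D‖ := by
          have := norm_nonneg (∫ z, F r z ∂D)
          have := norm_nonneg (∫ z, G r z ∂D)
          nlinarith
  have hTbdd : BddAbove T := by
    refine ⟨4, ?_⟩
    rintro v ⟨r, rfl⟩
    linarith [hnormF r, hnormG r]
  have hSbdd : BddAbove S := by
    refine ⟨4, ?_⟩
    intro v hv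
    obtain ⟨t, ht, hvt⟩ := hSle v hv
    obtain ⟨r, rfl⟩ := ht
    linarith [hnormF r, hnormG r]
  have hSne : S.Nonempty := ⟨_, hTS ⟨0, rfl⟩⟩
  apply le_antisymm
  · refine csSup_le hSne ?_
    intro v hv
    obtain ⟨t, ht, hvt⟩ := hSle v hv
    exact hvt.trans (le_csSup hTbdd ht)
  · exact csSup_le_csSup hSbdd ⟨_, ⟨0, rfl⟩⟩ hTS
end

section
/- Lemma 4.4 (a biased distribution with large decision calibration error). Let d ≥ 1, ε > 0, and σ ∈ {−1/√d, +1/√d}^d. Set v_i = (1/2)e_i ∈ ℝ^d and y_i = v_i + ε·sign(σ_i)·e₁ for i ∈ {1,…,d}. Then sup over r ∈ ℝ^d of ( ‖(1/d)·Σ_{i=1}^d (y_i − v_i)·1{⟨r, v_i⟩ > 0}‖₂ + ‖(1/d)·Σ_{i=1}^d (y_i − v_i)·1{⟨r, v_i⟩ ≤ 0}‖₂ ) ≥ ε; in fact, the choice r = σ makes the expression inside the supremum equal to ε. Hence the identity predictor has decision calibration error at least ε, for linear losses and optimal decision rules, under the distribution D_σ placing mass 1/d on each pair (v_i, y_i).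 -/
open RealInnerProductSpace
open scoped Classical

/-- The (empirical) decision calibration error of the identity predictor on the
finite distribution putting mass `1/d` on each pair `(v i, w i)`, for the
half-space split induced by `r` (cf. Lemma 4.2). -/
noncomputable def calErr (d : ℕ) (w v : Fin d → EuclideanSpace ℝ (Fin d))
    (r : EuclideanSpace ℝ (Fin d)) : ℝ :=
  ‖(1 / (d : ℝ)) • ∑ i, (if 0 < ⟪r, v i⟫ then (1 : ℝ) else 0) • (w i - v i)‖
    + ‖(1 / (d : ℝ)) • ∑ i, (if ⟪r, v i⟫ ≤ 0 then (1 : ℝ) else 0) • (w i - v i)‖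

/-- **Lemma 4.4** (a biased distribution with large decision calibration error).
With `v i = (1/2)eᵢ` and `y i = v i + ε·sign(σ i)·e₁` for a sign pattern
`σ ∈ {-1/√d, +1/√d}^d`, the choice `r = σ` makes the calibration-error expression
equal to `ε`, and hence the supremum over `r` is at least `ε`. -/
theorem stmt6 (d : ℕ) (hd : 0 < d) (ε : ℝ) (hε : 0 < ε)
    (σ : EuclideanSpace ℝ (Fin d))
    (hσ : ∀ i, σ i = 1 / Real.sqrt d ∨ σ i = -(1 / Real.sqrt d))
    (v y : Fin d → EuclideanSpace ℝ (Fin d))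
    (hv : ∀ i, v i = EuclideanSpace.single i ((1 : ℝ) / 2))
    (hy : ∀ i, y i = v i
        + (ε * Real.sign (σ i)) • EuclideanSpace.single (⟨0, hd⟩ : Fin d) (1 : ℝ)) :
    calErr d y v σ = ε ∧
      ε ≤ sSup {t : ℝ | ∃ r : EuclideanSpace ℝ (Fin d), t = calErr d y v r} := by
  have hsd : (0 : ℝ) < Real.sqrt d := Real.sqrt_pos.2 (by exact_mod_cast hd)
  have hpos : (0 : ℝ) < 1 / Real.sqrt d := by positivity
  set e0 : EuclideanSpace ℝ (Fin d) := EuclideanSpace.single (⟨0, hd⟩ : Fin d) (1 : ℝ)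
    with he0
  have hyv : ∀ i, y i - v i = (ε * Real.sign (σ i)) • e0 := by
    intro i; rw [hy i]; abel
  have hinner : ∀ i, ⟪σ, v i⟫ = (1 / 2 : ℝ) * σ i := by
    intro i
    rw [hv i, EuclideanSpace.inner_single_right]
    simp [mul_comm]
  set S : Finset (Fin d) := Finset.univ.filter (fun i => σ i = 1 / Real.sqrt d) with hS
  have hkle : S.card ≤ d :=
    le_trans (Finset.card_filter_le _ _) (by rw [Finset.card_univ, Fintype.card_fin])
  have hsum1 : ∑ i, (if 0 < ⟪σ, v i⟫ then (1 : ℝ) else 0) • (y i - v i)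
      = ((S.card : ℝ) * ε) • e0 := by
    have step : ∀ i, (if 0 < ⟪σ, v i⟫ then (1 : ℝ) else 0) • (y i - v i)
        = (if σ i = 1 / Real.sqrt d then ε else 0) • e0 := by
      intro i
      rcases hσ i with h | h
      · have h1 : 0 < ⟪σ, v i⟫ := by rw [hinner i, h]; positivity
        have hs : Real.sign (σ i) = 1 := Real.sign_of_pos (by rw [h]; exact hpos)
        rw [if_pos h1, if_pos h, one_smul, hyv i, hs, mul_one]
      · have hneg : σ i < 0 := by rw [h]; linarith
        have h1 : ¬ (0 < ⟪σ, v i⟫) := by rw [hinner i]; push_neg; nlinarith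
        have hne : σ i ≠ 1 / Real.sqrt d := by rw [h]; intro hc; linarith
        rw [if_neg h1, if_neg hne, zero_smul, zero_smul]
    rw [Finset.sum_congr rfl (fun i _ => step i), ← Finset.sum_smul]
    congr 1
    rw [← Finset.sum_filter, Finset.sum_const, nsmul_eq_mul]
  have hsum2 : ∑ i, (if ⟪σ, v i⟫ ≤ 0 then (1 : ℝ) else 0) • (y i - v i)
      = (-(((d : ℝ) - S.card) * ε)) • e0 := by
    have step : ∀ i, (if ⟪σ, v i⟫ ≤ 0 then (1 : ℝ) else 0) • (y i - v i)
        = (if σ i = 1 / Real.sqrt d then 0 else -ε) • e0 := by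
      intro i
      rcases hσ i with h | h
      · have h1 : ¬ (⟪σ, v i⟫ ≤ 0) := by
          rw [hinner i, h]; push_neg; positivity
        rw [if_neg h1, if_pos h, zero_smul, zero_smul]
      · have hneg : σ i < 0 := by rw [h]; linarith
        have h1 : ⟪σ, v i⟫ ≤ 0 := by rw [hinner i]; nlinarith
        have hs : Real.sign (σ i) = -1 := Real.sign_of_neg hneg
        have hne : σ i ≠ 1 / Real.sqrt d := by rw [h]; intro hc; linarith
        rw [if_pos h1, if_neg hne, one_smul, hyv i, hs, mul_neg_one]
    rw [Finset.sum_congr rfl (fun i _ => step i), ← Finset.sum_smul]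
    congr 1
    have hcard : (Finset.univ.filter (fun i => ¬ σ i = 1 / Real.sqrt d)).card
        = d - S.card := by
      rw [Finset.filter_not, Finset.card_sdiff_of_subset (Finset.filter_subset _ _),
        Finset.card_univ, Fintype.card_fin]
    rw [Finset.sum_ite, Finset.sum_const, Finset.sum_const, smul_zero, zero_add,
      hcard, nsmul_eq_mul, Nat.cast_sub hkle]
    ring
  have hd' : (0 : ℝ) < d := by exact_mod_cast hd
  have hne0 : ‖e0‖ = 1 := by rw [he0, EuclideanSpace.norm_single]; norm_num
  have hcal : calErr d y v σ = ε := by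
    unfold calErr
    rw [hsum1, hsum2]
    rw [norm_smul, norm_smul, norm_smul, norm_smul, hne0]
    have h1 : ‖(1 : ℝ) / d‖ = 1 / d := by
      rw [Real.norm_eq_abs]; exact abs_of_pos (by positivity)
    have h2 : ‖(S.card : ℝ) * ε‖ = (S.card : ℝ) * ε := by
      rw [Real.norm_eq_abs]; exact abs_of_nonneg (by positivity)
    have h3 : ‖(-(((d : ℝ) - S.card) * ε))‖ = ((d : ℝ) - S.card) * ε := by
      rw [Real.norm_eq_abs, abs_neg]
      apply abs_of_nonneg
      have : (S.card : ℝ) ≤ d := by exact_mod_cast hkle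
      nlinarith
    rw [h1, h2, h3, mul_one, mul_one]
    field_simp
    ring
  refine ⟨hcal, ?_⟩
  apply le_csSup
  · refine ⟨2 * ∑ i, ‖y i - v i‖, ?_⟩
    rintro t ⟨r, rfl⟩
    unfold calErr
    have key : ∀ (P : Fin d → Prop) [DecidablePred P],
        ‖(1 / (d : ℝ)) • ∑ i, (if P i then (1 : ℝ) else 0) • (y i - v i)‖
          ≤ ∑ i, ‖y i - v i‖ := by
      intro P _
      rw [norm_smul]
      have h1 : ‖(1 : ℝ) / d‖ ≤ 1 := by
        rw [Real.norm_eq_abs, abs_of_pos (by positivity), div_le_one hd']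
        exact_mod_cast hd
      calc ‖(1 : ℝ) / d‖ * ‖∑ i, (if P i then (1 : ℝ) else 0) • (y i - v i)‖
          ≤ 1 * ‖∑ i, (if P i then (1 : ℝ) else 0) • (y i - v i)‖ :=
            mul_le_mul_of_nonneg_right h1 (norm_nonneg _)
        _ = ‖∑ i, (if P i then (1 : ℝ) else 0) • (y i - v i)‖ := one_mul _
        _ ≤ ∑ i, ‖(if P i then (1 : ℝ) else 0) • (y i - v i)‖ := norm_sum_le _ _
        _ ≤ ∑ i, ‖y i - v i‖ := by
            apply Finset.sum_le_sum
            intro i _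
            rw [norm_smul]
            by_cases h : P i
            · simp [h]
            · simp [h, norm_nonneg]
    have k1 := key (fun i => 0 < ⟪r, v i⟫)
    have k2 := key (fun i => ⟪r, v i⟫ ≤ 0)
    linarith
  · exact ⟨σ, hcal.symm⟩
end

section
/- Lemma B.4 (ℓ₁–ℓ₂ Lipschitz continuity of the softmax). Let K ≥ 1 and β > 0, and for z ∈ ℝ^K define softmax_β(z)_i = exp(−β·z_i) / Σ_{j=1}^K exp(−β·z_j). Then for all z, z′ ∈ ℝ^K: Σ_{i=1}^K |softmax_β(z)_i − softmax_β(z′)_i| ≤ √2 · β · ‖z − z′‖₂. -/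
lemma log_aux {x : ℝ} (hx : 1 ≤ x) : 2 * (x - 1) ≤ (x + 1) * Real.log x := by
  have key : MonotoneOn (fun y : ℝ => (y + 1) * Real.log y - 2 * (y - 1)) (Set.Ici 1) := by
    have hdiff : ∀ y ∈ interior (Set.Ici (1:ℝ)),
        HasDerivAt (fun y : ℝ => (y + 1) * Real.log y - 2 * (y - 1))
          (Real.log y + (y + 1) * y⁻¹ - 2) y := by
      intro y hy
      rw [interior_Ici] at hy
      have hy0 : (0:ℝ) < y := lt_trans one_pos hy
      have h1 : HasDerivAt (fun y : ℝ => y + 1) 1 y := by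
        simpa using (hasDerivAt_id y).add_const 1
      have h2 : HasDerivAt Real.log y⁻¹ y := Real.hasDerivAt_log (ne_of_gt hy0)
      have h3 : HasDerivAt (fun y : ℝ => 2 * (y - 1)) 2 y := by
        simpa using ((hasDerivAt_id y).sub_const 1).const_mul 2
      have := (h1.mul h2).sub h3
      simp only [one_mul] at this
      exact this
    apply monotoneOn_of_deriv_nonneg (convex_Ici 1)
    · apply ContinuousOn.sub
      · apply ContinuousOn.mul (by fun_prop)
        apply Real.continuousOn_log.mono
        intro y hy
        simp only [Set.mem_Ici] at hy
        simp only [Set.mem_compl_iff, Set.mem_singleton_iff]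
        intro h; rw [h] at hy; linarith
      · fun_prop
    · intro y hy
      exact (hdiff y hy).differentiableAt.differentiableWithinAt
    · intro y hy
      rw [(hdiff y hy).deriv]
      rw [interior_Ici] at hy
      have hy0 : (0:ℝ) < y := lt_trans one_pos hy
      have hlog : 1 - y⁻¹ ≤ Real.log y := Real.one_sub_inv_le_log_of_pos hy0
      have hinv : (y + 1) * y⁻¹ = 1 + y⁻¹ := by field_simp
      rw [hinv]; linarith
  have h := key (Set.self_mem_Ici) (Set.mem_Ici.mpr hx) hx
  simpa using h

lemma log_key {a b : ℝ} (ha : 0 < a) (hb : 0 < b) :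
    2 * (a - b) ^ 2 ≤ ((a + b) * (a - b)) * (Real.log a - Real.log b) := by
  have main : ∀ u v : ℝ, 0 < u → 0 < v → v ≤ u →
      2 * (u - v) ^ 2 ≤ ((u + v) * (u - v)) * (Real.log u - Real.log v) := by
    intro u v hu hv huv
    have hx : 1 ≤ u / v := (one_le_div hv).mpr huv
    have h := log_aux hx
    rw [Real.log_div (ne_of_gt hu) (ne_of_gt hv)] at h
    have hL : 0 ≤ Real.log u - Real.log v := by
      have := Real.log_le_log hv huv
      linarith
    -- multiply h by v > 0 : 2*(u-v) ≤ (u+v)*(log u - log v)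
    have h2 : 2 * (u - v) ≤ (u + v) * (Real.log u - Real.log v) := by
      have := mul_le_mul_of_nonneg_right h (le_of_lt hv)
      have hv' : v ≠ 0 := ne_of_gt hv
      field_simp at this
      nlinarith [this]
    nlinarith [mul_le_mul_of_nonneg_right h2 (sub_nonneg.mpr huv)]
  rcases le_total b a with h | h
  · exact main a b ha hb h
  · have := main b a hb ha h
    nlinarith [this]

/-- **Lemma B.4** (ℓ₁–ℓ₂ Lipschitz continuity of the softmax). -/
theorem stmt12 (K : ℕ) (hK : 1 ≤ K) (β : ℝ) (hβ : 0 < β) (z z' : Fin K → ℝ) :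
    ∑ i, |Real.exp (-β * z i) / (∑ j, Real.exp (-β * z j))
          - Real.exp (-β * z' i) / (∑ j, Real.exp (-β * z' j))|
      ≤ Real.sqrt 2 * β * Real.sqrt (∑ i, (z i - z' i) ^ 2) := by
  have hne : (Finset.univ : Finset (Fin K)).Nonempty := ⟨⟨0, hK⟩, Finset.mem_univ _⟩
  set A := ∑ j, Real.exp (-β * z j) with hAdef
  set B := ∑ j, Real.exp (-β * z' j) with hBdef
  have hA : 0 < A := Finset.sum_pos (fun i _ => Real.exp_pos _) hne
  have hB : 0 < B := Finset.sum_pos (fun i _ => Real.exp_pos _) hne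
  set p : Fin K → ℝ := fun i => Real.exp (-β * z i) / A with hpdef
  set q : Fin K → ℝ := fun i => Real.exp (-β * z' i) / B with hqdef
  have hp : ∀ i, 0 < p i := fun i => div_pos (Real.exp_pos _) hA
  have hq : ∀ i, 0 < q i := fun i => div_pos (Real.exp_pos _) hB
  have hpsum : ∑ i, p i = 1 := by
    rw [hpdef, ← Finset.sum_div, ← hAdef, div_self (ne_of_gt hA)]
  have hqsum : ∑ i, q i = 1 := by
    rw [hqdef, ← Finset.sum_div, ← hBdef, div_self (ne_of_gt hB)]
  set S := ∑ i, |p i - q i| with hSdef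
  have hS0 : 0 ≤ S := Finset.sum_nonneg (fun i _ => abs_nonneg _)
  set M := Real.sqrt (∑ i, (z i - z' i) ^ 2) with hMdef
  have hM0 : 0 ≤ M := Real.sqrt_nonneg _
  have hMax : ∀ i, |z i - z' i| ≤ M := by
    intro i
    rw [← Real.sqrt_sq_eq_abs]
    exact Real.sqrt_le_sqrt (Finset.single_le_sum (f := fun j => (z j - z' j) ^ 2) (fun j _ => sq_nonneg _) (Finset.mem_univ i))
  -- Cauchy–Schwarz: S^2 ≤ (∑ (p-q)^2/(p+q)) * 2
  have cs : S ^ 2 ≤ (∑ i, (p i - q i) ^ 2 / (p i + q i)) * 2 := by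
    have h := Finset.sum_mul_sq_le_sq_mul_sq Finset.univ
      (fun i => |p i - q i| / Real.sqrt (p i + q i)) (fun i => Real.sqrt (p i + q i))
    have e1 : ∀ i : Fin K, |p i - q i| / Real.sqrt (p i + q i) * Real.sqrt (p i + q i)
        = |p i - q i| := by
      intro i
      have : Real.sqrt (p i + q i) ≠ 0 :=
        ne_of_gt (Real.sqrt_pos.mpr (by linarith [hp i, hq i]))
      field_simp
    have e2 : ∀ i : Fin K, (|p i - q i| / Real.sqrt (p i + q i)) ^ 2
        = (p i - q i) ^ 2 / (p i + q i) := by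
      intro i
      rw [div_pow, sq_abs, Real.sq_sqrt (by linarith [hp i, hq i])]
    have e3 : ∀ i : Fin K, (Real.sqrt (p i + q i)) ^ 2 = p i + q i := by
      intro i
      exact Real.sq_sqrt (by linarith [hp i, hq i])
    simp only [e1, e2, e3] at h
    have h2 : (1:ℝ) + 1 = 2 := by norm_num
    rw [Finset.sum_add_distrib, hpsum, hqsum, h2] at h
    exact h
  -- pointwise bound and the log identity
  have hsum2 : (∑ i, (p i - q i) ^ 2 / (p i + q i)) * 2
      ≤ ∑ i, (p i - q i) * (Real.log (p i) - Real.log (q i)) := by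
    rw [Finset.sum_mul]
    apply Finset.sum_le_sum
    intro i _
    have hpq : 0 < p i + q i := by linarith [hp i, hq i]
    rw [div_mul_eq_mul_div, div_le_iff₀ hpq]
    nlinarith [log_key (hp i) (hq i)]
  have hlogp : ∀ i, Real.log (p i) = -β * z i - Real.log A := by
    intro i
    rw [hpdef]
    simp [Real.log_div (Real.exp_ne_zero _) (ne_of_gt hA), Real.log_exp]
  have hlogq : ∀ i, Real.log (q i) = -β * z' i - Real.log B := by
    intro i
    rw [hqdef]
    simp [Real.log_div (Real.exp_ne_zero _) (ne_of_gt hB), Real.log_exp]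
  have hid : ∑ i, (p i - q i) * (Real.log (p i) - Real.log (q i))
      = ∑ i, (p i - q i) * (β * (z' i - z i)) := by
    have : ∀ i : Fin K, (p i - q i) * (Real.log (p i) - Real.log (q i))
        = (p i - q i) * (β * (z' i - z i)) + (p i - q i) * (Real.log B - Real.log A) := by
      intro i
      rw [hlogp i, hlogq i]; ring
    rw [Finset.sum_congr rfl (fun i _ => this i), Finset.sum_add_distrib,
      ← Finset.sum_mul, Finset.sum_sub_distrib, hpsum, hqsum]
    ring
  have hbound : ∑ i, (p i - q i) * (β * (z' i - z i)) ≤ β * S * M := by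
    have : ∀ i : Fin K, (p i - q i) * (β * (z' i - z i)) ≤ β * (|p i - q i| * M) := by
      intro i
      calc (p i - q i) * (β * (z' i - z i)) ≤ |(p i - q i) * (β * (z' i - z i))| := le_abs_self _
        _ = β * (|p i - q i| * |z i - z' i|) := by
            rw [abs_mul, abs_mul, abs_of_pos hβ, ← abs_neg (z' i - z i)]
            ring_nf
        _ ≤ β * (|p i - q i| * M) := by
            apply mul_le_mul_of_nonneg_left _ (le_of_lt hβ)
            exact mul_le_mul_of_nonneg_left (hMax i) (abs_nonneg _)
    calc ∑ i, (p i - q i) * (β * (z' i - z i)) ≤ ∑ i, β * (|p i - q i| * M) :=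
          Finset.sum_le_sum (fun i _ => this i)
      _ = β * S * M := by rw [← Finset.mul_sum, ← Finset.sum_mul]; ring
  have hfinal : S ^ 2 ≤ β * S * M := le_trans cs (le_trans hsum2 (hid ▸ hbound))
  -- conclude
  have hgoal : S ≤ Real.sqrt 2 * β * M := by
    rcases eq_or_lt_of_le hS0 with h | h
    · rw [← h]; positivity
    · have h1 : S ≤ β * M := by
        have := (mul_le_mul_iff_of_pos_right h).mp (by nlinarith [hfinal] : S * S ≤ (β * M) * S)
        exact this
      have h2 : (1:ℝ) ≤ Real.sqrt 2 := by
        rw [show (1:ℝ) = Real.sqrt 1 by simp]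
        exact Real.sqrt_le_sqrt (by norm_num)
      nlinarith [mul_nonneg (le_of_lt hβ) hM0]
  exact hgoal
end

section
/- Lemma B.5 (Lipschitz continuity of the softmax-weighted average). Let K ≥ 1 and β, R₁, R₂ > 0, and define g(z,w) = Σ_{i=1}^K (exp(−β·z_i)/Σ_{j=1}^K exp(−β·z_j))·w_i for z, w ∈ ℝ^K. If ‖w‖_∞ ≤ 4·R₁·R₂, then for all z′, w′ ∈ ℝ^K: |g(z,w) − g(z′,w′)| ≤ 4√2·β·R₁·R₂·‖z − z′‖₂ + ‖w − w′‖₂. -/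
open Finset Real

lemma avg_bound (K : ℕ) (p d : Fin K → ℝ) (hp : ∀ i, 0 ≤ p i) (hp1 : ∑ i, p i = 1) :
    |∑ i, p i * d i| ≤ Real.sqrt (∑ i, d i ^ 2) := by
  have h := Finset.sum_mul_sq_le_sq_mul_sq Finset.univ p d
  have h2 : ∑ i, p i ^ 2 ≤ 1 := by
    have := Finset.sum_sq_le_sq_sum_of_nonneg (s := Finset.univ) (f := p) (fun i _ => hp i)
    simpa [hp1] using this
  have h3 : (∑ i, p i * d i) ^ 2 ≤ ∑ i, d i ^ 2 := by
    have hd : 0 ≤ ∑ i, d i ^ 2 := Finset.sum_nonneg fun i _ => sq_nonneg _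
    calc (∑ i, p i * d i) ^ 2 ≤ (∑ i, p i ^ 2) * ∑ i, d i ^ 2 := h
      _ ≤ 1 * ∑ i, d i ^ 2 := by gcongr
      _ = _ := one_mul _
  calc |∑ i, p i * d i| = Real.sqrt ((∑ i, p i * d i) ^ 2) := (Real.sqrt_sq_eq_abs _).symm
    _ ≤ Real.sqrt (∑ i, d i ^ 2) := Real.sqrt_le_sqrt h3

lemma key (K : ℕ) (p u w : Fin K → ℝ) (M : ℝ) (hM : 0 ≤ M)
    (hp : ∀ i, 0 ≤ p i) (hp1 : ∑ i, p i = 1) (hw : ∀ i, |w i| ≤ M) :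
    |(∑ i, p i * u i * w i) - (∑ i, p i * w i) * (∑ i, p i * u i)|
      ≤ M * Real.sqrt (∑ i, u i ^ 2) := by
  set m := ∑ i, p i * u i with hm
  have h1 : (∑ i, p i * u i * w i) - (∑ i, p i * w i) * m
      = ∑ i, p i * w i * (u i - m) := by
    rw [Finset.sum_mul, ← Finset.sum_sub_distrib]
    exact Finset.sum_congr rfl fun i _ => by ring
  have hvar : ∑ i, p i * (u i - m) ^ 2 ≤ ∑ i, u i ^ 2 := by
    have e1 : ∑ i, p i * (u i - m) ^ 2 = (∑ i, p i * u i ^ 2) - m ^ 2 := by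
      have : ∀ i, p i * (u i - m) ^ 2
          = p i * u i ^ 2 - 2 * m * (p i * u i) + m ^ 2 * p i := fun i => by ring
      rw [Finset.sum_congr rfl fun i _ => this i]
      rw [Finset.sum_add_distrib, Finset.sum_sub_distrib, ← Finset.mul_sum, ← Finset.mul_sum,
        hp1, ← hm]
      ring
    have e2 : ∑ i, p i * u i ^ 2 ≤ ∑ i, u i ^ 2 := by
      apply Finset.sum_le_sum
      intro i _
      have hpi : p i ≤ 1 := by
        rw [← hp1]
        exact Finset.single_le_sum (fun j _ => hp j) (Finset.mem_univ i)
      nlinarith [sq_nonneg (u i), hp i]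
    nlinarith [sq_nonneg m]
  have hcs : ∑ i, p i * |u i - m| ≤ Real.sqrt (∑ i, p i * (u i - m) ^ 2) := by
    have h := Finset.sum_mul_sq_le_sq_mul_sq Finset.univ (fun i => Real.sqrt (p i))
      (fun i => Real.sqrt (p i) * |u i - m|)
    have e1 : ∀ i, Real.sqrt (p i) * (Real.sqrt (p i) * |u i - m|) = p i * |u i - m| := by
      intro i
      rw [← mul_assoc, Real.mul_self_sqrt (hp i)]
    have e2 : ∀ i, Real.sqrt (p i) ^ 2 = p i := fun i => Real.sq_sqrt (hp i)
    have e3 : ∀ i, (Real.sqrt (p i) * |u i - m|) ^ 2 = p i * (u i - m) ^ 2 := by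
      intro i
      rw [mul_pow, e2, sq_abs]
    simp only [e1, e2, e3, hp1, one_mul] at h
    have hnn : 0 ≤ ∑ i, p i * |u i - m| :=
      Finset.sum_nonneg fun i _ => mul_nonneg (hp i) (abs_nonneg _)
    calc ∑ i, p i * |u i - m| = Real.sqrt ((∑ i, p i * |u i - m|) ^ 2) := by
          rw [Real.sqrt_sq hnn]
      _ ≤ _ := Real.sqrt_le_sqrt h
  calc |(∑ i, p i * u i * w i) - (∑ i, p i * w i) * m|
      = |∑ i, p i * w i * (u i - m)| := by rw [h1]
    _ ≤ ∑ i, |p i * w i * (u i - m)| := Finset.abs_sum_le_sum_abs _ _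
    _ ≤ ∑ i, M * (p i * |u i - m|) := by
        apply Finset.sum_le_sum
        intro i _
        rw [abs_mul, abs_mul, abs_of_nonneg (hp i)]
        calc p i * |w i| * |u i - m| ≤ p i * M * |u i - m| :=
              mul_le_mul_of_nonneg_right (mul_le_mul_of_nonneg_left (hw i) (hp i)) (abs_nonneg _)
          _ = M * (p i * |u i - m|) := by ring
    _ = M * ∑ i, p i * |u i - m| := by rw [← Finset.mul_sum]
    _ ≤ M * Real.sqrt (∑ i, p i * (u i - m) ^ 2) := by gcongr
    _ ≤ M * Real.sqrt (∑ i, u i ^ 2) := by gcongr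

lemma key' (K : ℕ) (e u w : Fin K → ℝ) (M : ℝ) (hM : 0 ≤ M)
    (he : ∀ i, 0 < e i) (hS : 0 < ∑ i, e i) (hw : ∀ i, |w i| ≤ M) :
    |(∑ i, u i * e i * w i) * (∑ i, e i) - (∑ i, e i * w i) * (∑ i, u i * e i)|
      ≤ M * Real.sqrt (∑ i, u i ^ 2) * (∑ i, e i) ^ 2 := by
  set S := ∑ i, e i with hSdef
  have hS0 : S ≠ 0 := ne_of_gt hS
  set p : Fin K → ℝ := fun i => e i / S with hpdef
  have hp : ∀ i, 0 ≤ p i := fun i => div_nonneg (he i).le hS.le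
  have hp1 : ∑ i, p i = 1 := by
    rw [hpdef]; rw [← Finset.sum_div]; exact div_self hS0
  have e1 : ∑ i, p i * u i * w i = (∑ i, u i * e i * w i) / S := by
    rw [Finset.sum_div]; exact Finset.sum_congr rfl fun i _ => by rw [hpdef]; ring
  have e2 : ∑ i, p i * w i = (∑ i, e i * w i) / S := by
    rw [Finset.sum_div]; exact Finset.sum_congr rfl fun i _ => by rw [hpdef]; ring
  have e3 : ∑ i, p i * u i = (∑ i, u i * e i) / S := by
    rw [Finset.sum_div]; exact Finset.sum_congr rfl fun i _ => by rw [hpdef]; ring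
  have hkey := key K p u w M hM hp hp1 hw
  rw [e1, e2, e3] at hkey
  have expand : (∑ i, u i * e i * w i) * S - (∑ i, e i * w i) * (∑ i, u i * e i)
      = S ^ 2 * ((∑ i, u i * e i * w i) / S - (∑ i, e i * w i) / S * ((∑ i, u i * e i) / S)) := by
    field_simp
  rw [expand, abs_mul, abs_of_nonneg (sq_nonneg S)]
  calc S ^ 2 * |_| ≤ S ^ 2 * (M * Real.sqrt (∑ i, u i ^ 2)) := by gcongr
    _ = M * Real.sqrt (∑ i, u i ^ 2) * S ^ 2 := by ring

/-- **Lemma B.5** (Lipschitz continuity of the softmax-weighted average). -/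
theorem stmt13 (K : ℕ) (hK : 1 ≤ K) (β R₁ R₂ : ℝ)
    (hβ : 0 < β) (hR₁ : 0 < R₁) (hR₂ : 0 < R₂)
    (z w z' w' : Fin K → ℝ) (hw : ∀ i, |w i| ≤ 4 * R₁ * R₂) :
    |(∑ i, Real.exp (-β * z i) / (∑ j, Real.exp (-β * z j)) * w i)
        - ∑ i, Real.exp (-β * z' i) / (∑ j, Real.exp (-β * z' j)) * w' i|
      ≤ 4 * Real.sqrt 2 * β * R₁ * R₂ * Real.sqrt (∑ i, (z i - z' i) ^ 2)
          + Real.sqrt (∑ i, (w i - w' i) ^ 2) := by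
  have hKne : Nonempty (Fin K) := Fin.pos_iff_nonempty.mp hK
  set M : ℝ := 4 * R₁ * R₂ with hMdef
  have hM0 : 0 ≤ M := by positivity
  set u : Fin K → ℝ := fun i => z i - z' i with hudef
  set E : ℝ → Fin K → ℝ := fun t i => Real.exp (-β * (z' i + t * u i)) with hEdef
  set S : ℝ → ℝ := fun t => ∑ i, E t i with hSdef
  set N : ℝ → ℝ := fun t => ∑ i, E t i * w i with hNdef
  have hSpos : ∀ t, 0 < S t := fun t =>
    Finset.sum_pos (fun i _ => Real.exp_pos _) Finset.univ_nonempty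
  set f : ℝ → ℝ := fun t => N t / S t with hfdef
  have hE : ∀ t i, HasDerivAt (fun s => E s i) (E t i * (-β * u i)) t := by
    intro t i
    have h0 : HasDerivAt (fun s : ℝ => z' i + s * u i) (u i) t := by
      simpa using ((hasDerivAt_id t).mul_const (u i)).const_add (z' i)
    have h1 : HasDerivAt (fun s : ℝ => -β * (z' i + s * u i)) (-β * u i) t :=
      h0.const_mul (-β)
    simpa [hEdef] using h1.exp
  have hS' : ∀ t, HasDerivAt S (∑ i, E t i * (-β * u i)) t := fun t =>
    HasDerivAt.fun_sum fun i _ => hE t i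
  have hN' : ∀ t, HasDerivAt N (∑ i, E t i * (-β * u i) * w i) t := fun t =>
    HasDerivAt.fun_sum fun i _ => (hE t i).mul_const (w i)
  set D : ℝ → ℝ := fun t =>
    ((∑ i, E t i * (-β * u i) * w i) * S t - N t * (∑ i, E t i * (-β * u i))) / S t ^ 2
    with hDdef
  have hf : ∀ t, HasDerivAt f (D t) t := fun t => (hN' t).div (hS' t) (hSpos t).ne'
  have hbound : ∀ t, |D t| ≤ β * M * Real.sqrt (∑ i, u i ^ 2) := by
    intro t
    have hk := key' K (E t) u w M hM0 (fun i => Real.exp_pos _) (hSpos t) hw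
    have r1 : (∑ i, E t i * (-β * u i) * w i) = -β * ∑ i, u i * E t i * w i := by
      rw [Finset.mul_sum]; exact Finset.sum_congr rfl fun i _ => by ring
    have r2 : (∑ i, E t i * (-β * u i)) = -β * ∑ i, u i * E t i := by
      rw [Finset.mul_sum]; exact Finset.sum_congr rfl fun i _ => by ring
    have hDt : D t = -β * (((∑ i, u i * E t i * w i) * S t
        - (∑ i, E t i * w i) * (∑ i, u i * E t i)) / S t ^ 2) := by
      rw [hDdef]; simp only [r1, r2, hNdef]; ring
    rw [hDt, abs_mul, abs_neg, abs_of_pos hβ, abs_div, abs_of_nonneg (sq_nonneg (S t))]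
    rw [mul_assoc]
    gcongr
    rw [div_le_iff₀ (by positivity)]
    calc |(∑ i, u i * E t i * w i) * S t - (∑ i, E t i * w i) * (∑ i, u i * E t i)|
        ≤ M * Real.sqrt (∑ i, u i ^ 2) * S t ^ 2 := hk
      _ = M * Real.sqrt (∑ i, u i ^ 2) * S t ^ 2 := rfl
  have hmvt : |f 1 - f 0| ≤ β * M * Real.sqrt (∑ i, u i ^ 2) := by
    have h := Convex.norm_image_sub_le_of_norm_hasDerivWithin_le (s := Set.univ)
      (f := f) (f' := D) (C := β * M * Real.sqrt (∑ i, u i ^ 2))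
      (fun t _ => (hf t).hasDerivWithinAt) (fun t _ => by simpa using hbound t)
      convex_univ (Set.mem_univ 0) (Set.mem_univ 1)
    simpa using h
  have hzarg : ∀ i, -β * (z' i + (1:ℝ) * u i) = -β * z i := fun i => by
    rw [hudef]; ring
  have hzarg0 : ∀ i, -β * (z' i + (0:ℝ) * u i) = -β * z' i := fun i => by ring
  have hf1 : f 1 = ∑ i, Real.exp (-β * z i) / (∑ j, Real.exp (-β * z j)) * w i := by
    rw [hfdef, hNdef, hSdef]
    simp only [hEdef, hzarg]
    rw [Finset.sum_div]
    exact Finset.sum_congr rfl fun i _ => (div_mul_eq_mul_div _ _ _).symm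
  have hf0 : f 0 = ∑ i, Real.exp (-β * z' i) / (∑ j, Real.exp (-β * z' j)) * w i := by
    rw [hfdef, hNdef, hSdef]
    simp only [hEdef, hzarg0]
    rw [Finset.sum_div]
    exact Finset.sum_congr rfl fun i _ => (div_mul_eq_mul_div _ _ _).symm
  -- second term
  set S' : ℝ := ∑ j, Real.exp (-β * z' j) with hS'def
  have hS'pos : 0 < S' := Finset.sum_pos (fun i _ => Real.exp_pos _) Finset.univ_nonempty
  set p : Fin K → ℝ := fun i => Real.exp (-β * z' i) / S' with hpdef
  have hp : ∀ i, 0 ≤ p i := fun i => div_nonneg (Real.exp_pos _).le hS'pos.le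
  have hp1 : ∑ i, p i = 1 := by
    rw [hpdef, ← Finset.sum_div, ← hS'def]; exact div_self hS'pos.ne'
  have hsecond : |(∑ i, Real.exp (-β * z' i) / (∑ j, Real.exp (-β * z' j)) * w i)
      - ∑ i, Real.exp (-β * z' i) / (∑ j, Real.exp (-β * z' j)) * w' i|
      ≤ Real.sqrt (∑ i, (w i - w' i) ^ 2) := by
    have h1 : (∑ i, Real.exp (-β * z' i) / (∑ j, Real.exp (-β * z' j)) * w i)
        - ∑ i, Real.exp (-β * z' i) / (∑ j, Real.exp (-β * z' j)) * w' i
        = ∑ i, p i * (w i - w' i) := by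
      rw [← Finset.sum_sub_distrib]
      exact Finset.sum_congr rfl fun i _ => by rw [hpdef, hS'def]; ring
    rw [h1]
    exact avg_bound K p (fun i => w i - w' i) hp hp1
  have hsq2 : (1:ℝ) ≤ Real.sqrt 2 := by
    rw [show (1:ℝ) = Real.sqrt 1 from (Real.sqrt_one).symm]
    exact Real.sqrt_le_sqrt one_le_two
  have husum : (∑ i, u i ^ 2) = ∑ i, (z i - z' i) ^ 2 := by rw [hudef]
  have hsqrtnn : 0 ≤ Real.sqrt (∑ i, (z i - z' i) ^ 2) := Real.sqrt_nonneg _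
  calc |(∑ i, Real.exp (-β * z i) / (∑ j, Real.exp (-β * z j)) * w i)
        - ∑ i, Real.exp (-β * z' i) / (∑ j, Real.exp (-β * z' j)) * w' i|
      ≤ |(∑ i, Real.exp (-β * z i) / (∑ j, Real.exp (-β * z j)) * w i)
          - ∑ i, Real.exp (-β * z' i) / (∑ j, Real.exp (-β * z' j)) * w i|
        + |(∑ i, Real.exp (-β * z' i) / (∑ j, Real.exp (-β * z' j)) * w i)
          - ∑ i, Real.exp (-β * z' i) / (∑ j, Real.exp (-β * z' j)) * w' i| :=
        abs_sub_le _ _ _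
    _ ≤ β * M * Real.sqrt (∑ i, (z i - z' i) ^ 2) + Real.sqrt (∑ i, (w i - w' i) ^ 2) := by
        rw [← husum]
        exact add_le_add (by rw [← hf1, ← hf0]; exact hmvt) hsecond
    _ ≤ 4 * Real.sqrt 2 * β * R₁ * R₂ * Real.sqrt (∑ i, (z i - z' i) ^ 2)
          + Real.sqrt (∑ i, (w i - w' i) ^ 2) := by
        rw [← husum] at hsqrtnn
        rw [husum] at *
        have : β * M * Real.sqrt (∑ i, (z i - z' i) ^ 2)
            ≤ 4 * Real.sqrt 2 * β * R₁ * R₂ * Real.sqrt (∑ i, (z i - z' i) ^ 2) := by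
          rw [hMdef]
          calc β * (4 * R₁ * R₂) * Real.sqrt (∑ i, (z i - z' i) ^ 2)
              = 1 * (4 * β * R₁ * R₂ * Real.sqrt (∑ i, (z i - z' i) ^ 2)) := by ring
            _ ≤ Real.sqrt 2 * (4 * β * R₁ * R₂ * Real.sqrt (∑ i, (z i - z' i) ^ 2)) :=
                mul_le_mul_of_nonneg_right hsq2 (by positivity)
            _ = 4 * Real.sqrt 2 * β * R₁ * R₂ * Real.sqrt (∑ i, (z i - z' i) ^ 2) := by ring
        linarith
end

section
/- Lemma B.6 (pointwise comparison of gap functions). Let C = max{64·β²·R₁²·R₂², 2}. Then for all loss parameters r₁, r₁′, r₂, r₂′ : 𝒜 → ℋ (each with all norms at most R₁) and all (x,y) ∈ 𝒳×𝒴: |g_{r₁,r₁′}(x,y) − g_{r₂,r₂′}(x,y)|² ≤ C·( Σ_{a∈𝒜} ⟨r₁′(a) − r₂′(a), p(x)⟩² + Σ_{a∈𝒜} ⟨r₁(a) − r₂(a), φ(y) − p(x)⟩² ). -/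
open MeasureTheory RealInnerProductSpace

/-- The gap function `g_{r,r'}(x,y) = ∑ₐ ⟪r a, φ y - p x⟫ · k̃_{r'}(x,a)`, where
`k̃_{r'}` is the smooth optimal decision rule induced by the loss estimator
`f_p(x,a) = ⟪r' a, p x⟫` with temperature `β`. -/
noncomputable def gap {X Y A H : Type*} [Fintype A]
    [NormedAddCommGroup H] [InnerProductSpace ℝ H]
    (β : ℝ) (φ : Y → H) (p : X → H) (r r' : A → H) (z : X × Y) : ℝ :=
  ∑ a, ⟪r a, φ z.2 - p z.1⟫ *
    (Real.exp (-β * ⟪r' a, p z.1⟫) / ∑ a', Real.exp (-β * ⟪r' a', p z.1⟫))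

/-- Pointwise ratio bound for softmax weights. -/
lemma softmax_ratio {A : Type*} [Fintype A] [Nonempty A] (u v : A → ℝ) (D : ℝ)
    (h : ∀ a b, (u a - v a) - (u b - v b) ≤ D) (a : A) :
    Real.exp (-D) * (Real.exp (-u a) / ∑ b, Real.exp (-u b))
      ≤ Real.exp (-v a) / ∑ b, Real.exp (-v b) := by
  have hZu : (0:ℝ) < ∑ b, Real.exp (-u b) :=
    Finset.sum_pos (fun b _ => Real.exp_pos _) Finset.univ_nonempty
  have hZv : (0:ℝ) < ∑ b, Real.exp (-v b) :=
    Finset.sum_pos (fun b _ => Real.exp_pos _) Finset.univ_nonempty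
  rw [← mul_div_assoc, div_le_div_iff₀ hZu hZv]
  calc Real.exp (-D) * Real.exp (-u a) * ∑ b, Real.exp (-v b)
      = ∑ b, Real.exp (-D) * Real.exp (-u a) * Real.exp (-v b) := by rw [Finset.mul_sum]
    _ ≤ ∑ b, Real.exp (-v a) * Real.exp (-u b) := by
        apply Finset.sum_le_sum
        intro b _
        rw [← Real.exp_add, ← Real.exp_add, ← Real.exp_add]
        apply Real.exp_le_exp.2
        have := h b a
        linarith
    _ = Real.exp (-v a) * ∑ b, Real.exp (-u b) := by rw [Finset.mul_sum]

/-- Total-variation Lipschitz bound for softmax weights. -/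
lemma softmax_tv {A : Type*} [Fintype A] [Nonempty A] (u v : A → ℝ) (D : ℝ) (hD : 0 ≤ D)
    (h : ∀ a b, (u a - v a) - (u b - v b) ≤ D) :
    ∑ a, |Real.exp (-u a) / (∑ b, Real.exp (-u b))
          - Real.exp (-v a) / (∑ b, Real.exp (-v b))| ≤ 2 * D := by
  set Ku : A → ℝ := fun a => Real.exp (-u a) / (∑ b, Real.exp (-u b)) with hKu
  set Kv : A → ℝ := fun a => Real.exp (-v a) / (∑ b, Real.exp (-v b)) with hKv
  have hZu : (0:ℝ) < ∑ b, Real.exp (-u b) :=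
    Finset.sum_pos (fun b _ => Real.exp_pos _) Finset.univ_nonempty
  have hZv : (0:ℝ) < ∑ b, Real.exp (-v b) :=
    Finset.sum_pos (fun b _ => Real.exp_pos _) Finset.univ_nonempty
  have hKu0 : ∀ a, 0 ≤ Ku a := fun a => div_nonneg (Real.exp_pos _).le hZu.le
  have hKv0 : ∀ a, 0 ≤ Kv a := fun a => div_nonneg (Real.exp_pos _).le hZv.le
  have hKusum : ∑ a, Ku a = 1 := by
    rw [hKu, ← Finset.sum_div, div_self hZu.ne']
  have hKvsum : ∑ a, Kv a = 1 := by
    rw [hKv, ← Finset.sum_div, div_self hZv.ne']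
  have h1 : ∀ a, Real.exp (-D) * Ku a ≤ Kv a := softmax_ratio u v D h
  have h2 : ∀ a, Real.exp (-D) * Kv a ≤ Ku a := by
    apply softmax_ratio v u D
    intro a b
    have := h b a
    linarith
  have hexp1 : Real.exp (-D) ≤ 1 := Real.exp_le_one_iff.2 (by linarith)
  have hexp2 : 1 - D ≤ Real.exp (-D) := by
    have := Real.add_one_le_exp (-D)
    linarith
  have habs : ∀ a, |Ku a - Kv a| ≤ (1 - Real.exp (-D)) * (Ku a + Kv a) := by
    intro a
    rw [abs_sub_le_iff]
    constructor
    · nlinarith [h1 a, hKu0 a, hKv0 a, hexp1]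
    · nlinarith [h2 a, hKu0 a, hKv0 a, hexp1]
  calc ∑ a, |Ku a - Kv a| ≤ ∑ a, (1 - Real.exp (-D)) * (Ku a + Kv a) :=
        Finset.sum_le_sum fun a _ => habs a
    _ = (1 - Real.exp (-D)) * 2 := by
        rw [← Finset.mul_sum, Finset.sum_add_distrib, hKusum, hKvsum]
        norm_num
    _ ≤ 2 * D := by nlinarith

/-- **Lemma B.6** (pointwise comparison of gap functions). -/
theorem stmt14 {X Y A H : Type*} [MeasurableSpace X] [MeasurableSpace Y]
    [Fintype A] [Nonempty A]
    [NormedAddCommGroup H] [InnerProductSpace ℝ H]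
    (R₁ R₂ β : ℝ) (hR₁ : 0 < R₁) (hR₂ : 0 < R₂) (hβ : 0 < β)
    (φ : Y → H) (hφ : ∀ y, ‖φ y‖ ≤ R₂)
    (p : X → H) (hp : ∀ x, ‖p x‖ ≤ R₂)
    (r₁ r₁' r₂ r₂' : A → H)
    (h₁ : ∀ a, ‖r₁ a‖ ≤ R₁) (h₁' : ∀ a, ‖r₁' a‖ ≤ R₁)
    (h₂ : ∀ a, ‖r₂ a‖ ≤ R₁) (h₂' : ∀ a, ‖r₂' a‖ ≤ R₁)
    (x : X) (y : Y) :
    |gap β φ p r₁ r₁' (x, y) - gap β φ p r₂ r₂' (x, y)| ^ 2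
      ≤ max (64 * β ^ 2 * R₁ ^ 2 * R₂ ^ 2) 2 *
          ((∑ a, ⟪r₁' a - r₂' a, p x⟫ ^ 2) + ∑ a, ⟪r₁ a - r₂ a, φ y - p x⟫ ^ 2) := by
  classical
  set S₁ : ℝ := ∑ a, ⟪r₁' a - r₂' a, p x⟫ ^ 2 with hS₁def
  set S₂ : ℝ := ∑ a, ⟪r₁ a - r₂ a, φ y - p x⟫ ^ 2 with hS₂def
  have hS₁0 : 0 ≤ S₁ := Finset.sum_nonneg fun a _ => sq_nonneg _
  have hS₂0 : 0 ≤ S₂ := Finset.sum_nonneg fun a _ => sq_nonneg _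
  set D : ℝ := Real.sqrt (2 * S₁) with hDdef
  have hD0 : 0 ≤ D := Real.sqrt_nonneg _
  have hDsq : D ^ 2 = 2 * S₁ := Real.sq_sqrt (by linarith)
  -- oscillation bound on the score differences
  have hδ : ∀ a b : A, ⟪r₁' a - r₂' a, p x⟫ - ⟪r₁' b - r₂' b, p x⟫ ≤ D := by
    intro a b
    rcases eq_or_ne a b with rfl | hab
    · simpa using hD0
    · have hmem : ⟪r₁' a - r₂' a, p x⟫ ^ 2 + ⟪r₁' b - r₂' b, p x⟫ ^ 2 ≤ S₁ := by
        have := Finset.sum_le_sum_of_subset_of_nonneg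
          (Finset.subset_univ ({a, b} : Finset A))
          (fun i _ _ => sq_nonneg (⟪r₁' i - r₂' i, p x⟫ : ℝ))
        rwa [Finset.sum_pair hab] at this
      have h2 : (⟪r₁' a - r₂' a, p x⟫ - ⟪r₁' b - r₂' b, p x⟫) ^ 2 ≤ 2 * S₁ := by
        nlinarith [sq_nonneg (⟪r₁' a - r₂' a, p x⟫ + ⟪r₁' b - r₂' b, p x⟫ : ℝ)]
      calc ⟪r₁' a - r₂' a, p x⟫ - ⟪r₁' b - r₂' b, p x⟫
          ≤ |⟪r₁' a - r₂' a, p x⟫ - ⟪r₁' b - r₂' b, p x⟫| := le_abs_self _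
        _ ≤ D := Real.abs_le_sqrt h2
  -- softmax weights
  set u : A → ℝ := fun a => β * ⟪r₁' a, p x⟫ with hu
  set v : A → ℝ := fun a => β * ⟪r₂' a, p x⟫ with hv
  set K₁ : A → ℝ := fun a => Real.exp (-u a) / ∑ b, Real.exp (-u b) with hK₁
  set K₂ : A → ℝ := fun a => Real.exp (-v a) / ∑ b, Real.exp (-v b) with hK₂
  have hZ₁ : (0:ℝ) < ∑ b, Real.exp (-u b) :=
    Finset.sum_pos (fun b _ => Real.exp_pos _) Finset.univ_nonempty
  have hK₁0 : ∀ a, 0 ≤ K₁ a := fun a => div_nonneg (Real.exp_pos _).le hZ₁.le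
  have hK₁sum : ∑ a, K₁ a = 1 := by
    rw [hK₁, ← Finset.sum_div, div_self hZ₁.ne']
  have hgap₁ : gap β φ p r₁ r₁' (x, y) = ∑ a, ⟪r₁ a, φ y - p x⟫ * K₁ a := by
    simp only [gap, hK₁, hu, neg_mul]
  have hgap₂ : gap β φ p r₂ r₂' (x, y) = ∑ a, ⟪r₂ a, φ y - p x⟫ * K₂ a := by
    simp only [gap, hK₂, hv, neg_mul]
  -- decomposition
  have hdecomp : gap β φ p r₁ r₁' (x, y) - gap β φ p r₂ r₂' (x, y)
      = (∑ a, ⟪r₁ a - r₂ a, φ y - p x⟫ * K₁ a)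
        + ∑ a, ⟪r₂ a, φ y - p x⟫ * (K₁ a - K₂ a) := by
    rw [hgap₁, hgap₂, ← Finset.sum_sub_distrib, ← Finset.sum_add_distrib]
    refine Finset.sum_congr rfl fun a _ => ?_
    rw [inner_sub_left]
    ring
  -- bound on first term
  have hA : |∑ a, ⟪r₁ a - r₂ a, φ y - p x⟫ * K₁ a| ≤ Real.sqrt S₂ := by
    calc |∑ a, ⟪r₁ a - r₂ a, φ y - p x⟫ * K₁ a|
        ≤ ∑ a, |⟪r₁ a - r₂ a, φ y - p x⟫ * K₁ a| := Finset.abs_sum_le_sum_abs _ _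
      _ ≤ ∑ a, Real.sqrt S₂ * K₁ a := by
          apply Finset.sum_le_sum
          intro a _
          rw [abs_mul, abs_of_nonneg (hK₁0 a)]
          refine mul_le_mul_of_nonneg_right ?_ (hK₁0 a)
          apply Real.abs_le_sqrt
          rw [hS₂def]
          exact Finset.single_le_sum
            (f := fun a => (⟪r₁ a - r₂ a, φ y - p x⟫ : ℝ) ^ 2)
            (fun i _ => sq_nonneg _) (Finset.mem_univ a)
      _ = Real.sqrt S₂ := by rw [← Finset.mul_sum, hK₁sum, mul_one]
  -- total variation bound on softmax weights
  have hTV : ∑ a, |K₁ a - K₂ a| ≤ 2 * (β * D) := by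
    rw [hK₁, hK₂]
    apply softmax_tv u v (β * D) (by positivity)
    intro a b
    have hab := hδ a b
    have : u a - v a - (u b - v b)
        = β * (⟪r₁' a - r₂' a, p x⟫ - ⟪r₁' b - r₂' b, p x⟫) := by
      simp only [hu, hv, inner_sub_left]
      ring
    rw [this]
    exact mul_le_mul_of_nonneg_left hab hβ.le
  -- bound on second term
  have hw₂ : ∀ a, |⟪r₂ a, φ y - p x⟫| ≤ 2 * R₁ * R₂ := by
    intro a
    calc |⟪r₂ a, φ y - p x⟫| ≤ ‖r₂ a‖ * ‖φ y - p x‖ := abs_real_inner_le_norm _ _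
      _ ≤ R₁ * (2 * R₂) := by
          apply mul_le_mul (h₂ a) _ (norm_nonneg _) hR₁.le
          calc ‖φ y - p x‖ ≤ ‖φ y‖ + ‖p x‖ := norm_sub_le _ _
            _ ≤ R₂ + R₂ := add_le_add (hφ y) (hp x)
            _ = 2 * R₂ := by ring
      _ = 2 * R₁ * R₂ := by ring
  have hB : |∑ a, ⟪r₂ a, φ y - p x⟫ * (K₁ a - K₂ a)| ≤ 2 * R₁ * R₂ * (2 * (β * D)) := by
    calc |∑ a, ⟪r₂ a, φ y - p x⟫ * (K₁ a - K₂ a)|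
        ≤ ∑ a, |⟪r₂ a, φ y - p x⟫ * (K₁ a - K₂ a)| := Finset.abs_sum_le_sum_abs _ _
      _ ≤ ∑ a, 2 * R₁ * R₂ * |K₁ a - K₂ a| := by
          apply Finset.sum_le_sum
          intro a _
          rw [abs_mul]
          exact mul_le_mul_of_nonneg_right (hw₂ a) (abs_nonneg _)
      _ = 2 * R₁ * R₂ * ∑ a, |K₁ a - K₂ a| := by rw [Finset.mul_sum]
      _ ≤ 2 * R₁ * R₂ * (2 * (β * D)) := by
          apply mul_le_mul_of_nonneg_left hTV
          positivity
  -- combine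
  have habs : |gap β φ p r₁ r₁' (x, y) - gap β φ p r₂ r₂' (x, y)|
      ≤ Real.sqrt S₂ + 2 * R₁ * R₂ * (2 * (β * D)) := by
    rw [hdecomp]
    exact (abs_add_le _ _).trans (add_le_add hA hB)
  have hsq : |gap β φ p r₁ r₁' (x, y) - gap β φ p r₂ r₂' (x, y)| ^ 2
      ≤ (Real.sqrt S₂ + 2 * R₁ * R₂ * (2 * (β * D))) ^ 2 :=
    pow_le_pow_left₀ (abs_nonneg _) habs 2
  have hs2 : Real.sqrt S₂ ^ 2 = S₂ := Real.sq_sqrt hS₂0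
  have hM1 : 64 * β ^ 2 * R₁ ^ 2 * R₂ ^ 2 ≤ max (64 * β ^ 2 * R₁ ^ 2 * R₂ ^ 2) 2 :=
    le_max_left _ _
  have hM2 : (2:ℝ) ≤ max (64 * β ^ 2 * R₁ ^ 2 * R₂ ^ 2) 2 := le_max_right _ _
  nlinarith [sq_nonneg (Real.sqrt S₂ - 2 * R₁ * R₂ * (2 * (β * D))), hDsq, hs2,
    mul_nonneg hS₁0 (sub_nonneg.2 hM1), mul_nonneg hS₂0 (sub_nonneg.2 hM2)]
end
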